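/- For every integer d ≥ 2, the set Z_{d,G} = {x ∈ T : liminf_{N→∞} |∑_{n=1}^{N} exp(2πi x n^d)| = 0} contains a dense G_δ subset of T = R/Z. -/

import Mathlib

open Complex Filter

/-- The monomial (generalised Gaussian) sum `G_d(x; N) = ∑_{n=1}^N e(x n^d)`. -/
noncomputable def monomialSum (d : ℕ) (x : ℝ) (N : ℕ) : ℂ :=
  ∑ n ∈ Finset.Icc 1 N, Complex.exp (2 * Real.pi * Complex.I * (x : ℂ) * (n : ℂ) ^ d)

lemma aux_even_pow_sub_self (d : ℕ) (hd : d ≠ 0) (t : ℤ) : Even (t ^ d - t) := by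
  rcases Int.even_or_odd t with h | h
  · exact (h.pow_of_ne_zero hd).sub h
  · exact (h.pow).sub_odd h

lemma aux_key_dvd (d : ℕ) (hd : d ≠ 0) (m n : ℤ) (hm : Odd m) :
    (2 * m) ∣ ((n + m) ^ d - (n ^ d + m)) := by
  have h2 : (2 : ℤ) ∣ ((n + m) ^ d - (n ^ d + m)) := by
    have e1 := aux_even_pow_sub_self d hd (n + m)
    have e2 := aux_even_pow_sub_self d hd n
    have heq : (n + m) ^ d - (n ^ d + m) = ((n + m) ^ d - (n + m)) - (n ^ d - n) := by ring
    rw [heq]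
    exact (e1.sub e2).two_dvd
  have hmd : m ∣ ((n + m) ^ d - (n ^ d + m)) := by
    have h1 : m ∣ (n + m) ^ d - n ^ d := by
      have : (n : ℤ) ≡ n + m [ZMOD m] := Int.modEq_iff_dvd.mpr (by simp)
      exact (this.pow d).dvd
    have heq : (n + m) ^ d - (n ^ d + m) = ((n + m) ^ d - n ^ d) - m := by ring
    rw [heq]
    exact dvd_sub h1 dvd_rfl
  have hcop : IsCoprime (2 : ℤ) m :=
    (Int.prime_two.coprime_iff_not_dvd).mpr (by
      rw [Int.two_dvd_ne_zero, Int.odd_iff] at *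
      omega)
  exact hcop.mul_dvd h2 hmd


lemma aux_exp_congr (a : ℤ) (m : ℕ) (hm : 0 < m) (x : ℝ) (hx : x = (a : ℝ) / (2 * m))
    {s t : ℤ} (h : (2 * (m : ℤ)) ∣ (t - s)) :
    Complex.exp (2 * Real.pi * Complex.I * (x : ℂ) * (t : ℂ)) =
      Complex.exp (2 * Real.pi * Complex.I * (x : ℂ) * (s : ℂ)) := by
  obtain ⟨k, hk⟩ := h
  have ht : (t : ℂ) = (s : ℂ) + 2 * m * k := by
    have h2 : (t : ℤ) = s + 2 * m * k := by linarith
    exact_mod_cast congrArg (Int.cast : ℤ → ℂ) h2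
  have hm0 : ((m : ℂ)) ≠ 0 := by exact_mod_cast hm.ne'
  have hπ : ((x : ℝ) : ℂ) = (a : ℂ) / (2 * m) := by rw [hx]; push_cast; ring
  rw [ht, hπ]
  have key : 2 * (Real.pi : ℂ) * Complex.I * ((a : ℂ) / (2 * m)) * ((s : ℂ) + 2 * m * k) =
      2 * (Real.pi : ℂ) * Complex.I * ((a : ℂ) / (2 * m)) * (s : ℂ) +
        ((a * k : ℤ) : ℂ) * (2 * Real.pi * Complex.I) := by
    push_cast
    field_simp
  rw [key, Complex.exp_add, Complex.exp_int_mul_two_pi_mul_I, mul_one]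

lemma aux_exp_add_m (a : ℤ) (m : ℕ) (ha : Odd a) (hm : 0 < m) (x : ℝ)
    (hx : x = (a : ℝ) / (2 * m)) (t : ℤ) :
    Complex.exp (2 * Real.pi * Complex.I * (x : ℂ) * ((t + m : ℤ) : ℂ)) =
      - Complex.exp (2 * Real.pi * Complex.I * (x : ℂ) * (t : ℂ)) := by
  have hm0 : ((m : ℂ)) ≠ 0 := by exact_mod_cast hm.ne'
  have hπ : ((x : ℝ) : ℂ) = (a : ℂ) / (2 * m) := by rw [hx]; push_cast; ring
  rw [hπ]
  have key : 2 * (Real.pi : ℂ) * Complex.I * ((a : ℂ) / (2 * m)) * ((t + m : ℤ) : ℂ) =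
      2 * (Real.pi : ℂ) * Complex.I * ((a : ℂ) / (2 * m)) * (t : ℂ) +
        (a : ℂ) * ((Real.pi : ℂ) * Complex.I) := by
    push_cast
    field_simp
  rw [key, Complex.exp_add, Complex.exp_int_mul, Complex.exp_pi_mul_I, ha.neg_one_zpow]
  ring

lemma aux_g_neg (d : ℕ) (hd : d ≠ 0) (a : ℤ) (m : ℕ) (ha : Odd a) (hm : Odd m)
    (x : ℝ) (hx : x = (a : ℝ) / (2 * m)) (n : ℕ) :
    Complex.exp (2 * Real.pi * Complex.I * (x : ℂ) * ((m + n : ℕ) : ℂ) ^ d) =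
      - Complex.exp (2 * Real.pi * Complex.I * (x : ℂ) * (n : ℂ) ^ d) := by
  have hm1 : 0 < m := hm.pos
  have hmz : Odd (m : ℤ) := by exact_mod_cast hm
  have c1 : ((m + n : ℕ) : ℂ) ^ d = ((((n : ℤ) + m) ^ d : ℤ) : ℂ) := by push_cast; ring
  have c2 : ((n : ℕ) : ℂ) ^ d = ((((n : ℤ)) ^ d : ℤ) : ℂ) := by push_cast; ring
  rw [c1, c2]
  have hdvd : (2 * (m : ℤ)) ∣ (((n : ℤ) + m) ^ d - ((n : ℤ) ^ d + m)) :=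
    aux_key_dvd d hd (m : ℤ) (n : ℤ) hmz
  rw [aux_exp_congr a m hm1 x hx hdvd]
  exact aux_exp_add_m a m ha hm1 x hx ((n : ℤ) ^ d)

lemma aux_block (d : ℕ) (hd : d ≠ 0) (a : ℤ) (m : ℕ) (ha : Odd a) (hm : Odd m)
    (x : ℝ) (hx : x = (a : ℝ) / (2 * m)) (c : ℕ) :
    ∑ n ∈ Finset.Ioc c (c + 2 * m),
        Complex.exp (2 * Real.pi * Complex.I * (x : ℂ) * (n : ℂ) ^ d) = 0 := by
  set g : ℕ → ℂ := fun n => Complex.exp (2 * Real.pi * Complex.I * (x : ℂ) * (n : ℂ) ^ d)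
    with hg
  have hsplit : ∑ n ∈ Finset.Ioc c (c + m), g n + ∑ n ∈ Finset.Ioc (c + m) (c + 2 * m), g n =
      ∑ n ∈ Finset.Ioc c (c + 2 * m), g n :=
    Finset.sum_Ioc_consecutive g (Nat.le_add_right _ _) (by omega)
  have hmap : Finset.Ioc (c + m) (c + 2 * m) =
      Finset.map (addLeftEmbedding m) (Finset.Ioc c (c + m)) := by
    rw [Finset.map_add_left_Ioc]
    congr 1 <;> omega
  have hsecond : ∑ n ∈ Finset.Ioc (c + m) (c + 2 * m), g n =
      - ∑ n ∈ Finset.Ioc c (c + m), g n := by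
    rw [hmap, Finset.sum_map, ← Finset.sum_neg_distrib]
    refine Finset.sum_congr rfl fun n _ => ?_
    show g (m + n) = - g n
    exact aux_g_neg d hd a m ha hm x hx n
  rw [← hsplit, hsecond]
  ring

lemma aux_zero (d : ℕ) (hd : d ≠ 0) (a : ℤ) (m : ℕ) (ha : Odd a) (hm : Odd m) (K : ℕ) :
    monomialSum d ((a : ℝ) / (2 * m)) (2 * m * K) = 0 := by
  induction K with
  | zero => simp [monomialSum]
  | succ K ih =>
    unfold monomialSum at *
    rw [show Finset.Icc (1 : ℕ) = Finset.Ioc 0 from funext fun b => by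
      ext n; simp only [Finset.mem_Icc, Finset.mem_Ioc]; constructor <;> intro h <;> omega] at ih ⊢
    have hN : 2 * m * (K + 1) = 2 * m * K + 2 * m := by ring
    rw [hN, ← Finset.sum_Ioc_consecutive _ (Nat.zero_le _) (Nat.le_add_right _ _), ih,
      aux_block d hd a m ha hm _ rfl (2 * m * K), zero_add]

lemma aux_dense :
    Dense {x : ℝ | ∃ (a : ℤ) (m : ℕ), Odd a ∧ Odd m ∧ x = (a : ℝ) / (2 * m)} := by
  rw [Metric.dense_iff]
  intro x r hr
  set M : ℕ := ⌈1 / r⌉₊ with hM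
  set m : ℕ := 2 * M + 1 with hmdef
  have hm : Odd m := ⟨M, by omega⟩
  have hmpos : (0 : ℝ) < m := by positivity
  set a : ℤ := 2 * ⌊(m : ℝ) * x⌋ + 1 with hadef
  have ha : Odd a := ⟨⌊(m : ℝ) * x⌋, by ring⟩
  refine ⟨(a : ℝ) / (2 * m), ?_, a, m, ha, hm, rfl⟩
  rw [Metric.mem_ball, Real.dist_eq]
  have hfl1 : ((⌊(m : ℝ) * x⌋ : ℝ)) ≤ (m : ℝ) * x := Int.floor_le _
  have hfl2 : (m : ℝ) * x - 1 < (⌊(m : ℝ) * x⌋ : ℝ) := Int.sub_one_lt_floor _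
  have hacast : (a : ℝ) = 2 * (⌊(m : ℝ) * x⌋ : ℝ) + 1 := by rw [hadef]; push_cast; ring
  have hnum : |(a : ℝ) - 2 * m * x| ≤ 1 := by
    rw [abs_le, hacast]
    constructor <;> linarith
  have hMr : 1 ≤ (M : ℝ) * r := by
    rw [← div_le_iff₀ hr]
    exact Nat.le_ceil _
  have hmr : 1 < 2 * (m : ℝ) * r := by
    have hmM : (m : ℝ) = 2 * (M : ℝ) + 1 := by rw [hmdef]; push_cast; ring
    nlinarith
  have hrewrite : (a : ℝ) / (2 * m) - x = ((a : ℝ) - 2 * m * x) / (2 * m) := by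
    field_simp
  rw [hrewrite, abs_div, abs_of_pos (by positivity : (0:ℝ) < 2 * (m:ℝ))]
  calc |(a : ℝ) - 2 * m * x| / (2 * m) ≤ 1 / (2 * m) := by
        gcongr
    _ < r := by
        rw [div_lt_iff₀ (by positivity)]
        linarith

theorem zero_set_monomial_contains_dense_Gdelta (d : ℕ) (hd : 2 ≤ d) :
    ∃ G : Set ℝ, IsGδ G ∧ Dense G ∧
      G ⊆ {x : ℝ | atTop.liminf (fun N => ‖monomialSum d x N‖) = 0} := by
  have hd0 : d ≠ 0 := by omega
  set G : Set ℝ := ⋂ (k : ℕ), ⋂ (M : ℕ), ⋃ (N : ℕ), ⋃ (_ : M ≤ N),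
      {x : ℝ | ‖monomialSum d x N‖ < 1 / (k + 1)} with hG
  have hcont : ∀ N : ℕ, Continuous fun x : ℝ => ‖monomialSum d x N‖ := by
    intro N
    apply continuous_norm.comp
    unfold monomialSum
    apply continuous_finset_sum
    intro n _
    apply Complex.continuous_exp.comp
    exact (continuous_const.mul Complex.continuous_ofReal).mul continuous_const
  have hDsub : {x : ℝ | ∃ (a : ℤ) (m : ℕ), Odd a ∧ Odd m ∧ x = (a : ℝ) / (2 * m)} ⊆ G := by
    rintro x ⟨a, m, ha, hm, rfl⟩
    simp only [hG, Set.mem_iInter, Set.mem_iUnion, Set.mem_setOf_eq]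
    intro k M
    refine ⟨2 * m * (M + 1), ?_, ?_⟩
    · have hm1 : 1 ≤ m := hm.pos
      nlinarith
    · rw [aux_zero d hd0 a m ha hm (M + 1)]
      simp only [norm_zero]
      positivity
  refine ⟨G, ?_, ?_, ?_⟩
  · apply IsGδ.iInter; intro k
    apply IsGδ.iInter; intro M
    apply IsOpen.isGδ
    apply isOpen_iUnion; intro N
    apply isOpen_iUnion; intro _
    exact isOpen_lt (hcont N) continuous_const
  · exact aux_dense.mono hDsub
  · intro x hx
    simp only [hG, Set.mem_iInter, Set.mem_iUnion, Set.mem_setOf_eq] at hx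
    have hbdd : IsBoundedUnder (· ≥ ·) atTop (fun N => ‖monomialSum d x N‖) :=
      isBoundedUnder_of ⟨0, fun N => norm_nonneg _⟩
    have hle : ∀ k : ℕ,
        atTop.liminf (fun N => ‖monomialSum d x N‖) ≤ 1 / (k + 1) := by
      intro k
      refine liminf_le_of_frequently_le ?_ hbdd
      rw [frequently_atTop]
      intro M
      obtain ⟨N, hNM, hN⟩ := hx k M
      exact ⟨N, hNM, hN.le⟩
    have hge : 0 ≤ atTop.liminf (fun N => ‖monomialSum d x N‖) := by
      have hfreq : ∃ᶠ N in atTop, ‖monomialSum d x N‖ ≤ 1 := by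
        rw [frequently_atTop]
        intro M
        obtain ⟨N, hNM, hN⟩ := hx 0 M
        exact ⟨N, hNM, hN.le.trans (by norm_num)⟩
      refine le_liminf_of_le (IsCoboundedUnder.of_frequently_le hfreq) ?_
      exact Eventually.of_forall fun N => norm_nonneg _
    show atTop.liminf (fun N => ‖monomialSum d x N‖) = 0
    by_contra hne
    have hpos : 0 < atTop.liminf (fun N => ‖monomialSum d x N‖) :=
      lt_of_le_of_ne hge (Ne.symm hne)
    obtain ⟨k, hk⟩ := exists_nat_one_div_lt hpos
    exact absurd (hle k) (not_le.mpr hk)
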